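/- Let π_i > 0 and r_i > 0 for i=1,…,k, with at least one r_i > 1. With F(λ) = Σ_{i: r_i + 1/λ > 1} [ π_i log(r_i + 1/λ) - r_i π_i (1 - λ/(1+λ r_i)) ], one has F(λ) → +∞ as λ → 0⁺ and lim_{λ→+∞} F(λ) = Σ_{i: r_i > 1} π_i (log r_i - (r_i - 1)) < 0. Hence F has a zero λ* ∈ (0,∞). -/

import Mathlib

open scoped Classical

open Filter

/-- With `π_i > 0`, `r_i > 0` and at least one `r_i > 1`, the
function `F(λ) = Σ_{i: r_i + 1/λ > 1} [π_i log(r_i + 1/λ) -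
r_i π_i (1 - λ/(1+λ r_i))]` tends to +∞ as λ → 0⁺ and tends to
`Σ_{i: r_i > 1} π_i (log r_i - (r_i - 1)) < 0` as λ → +∞; hence F has a zero
λ* ∈ (0,∞). -/
theorem stmt_16 {k : ℕ} (π r : Fin k → ℝ) (hπ : ∀ i, 0 < π i)
    (hr : ∀ i, 0 < r i) (hsup : ∃ i, 1 < r i) :
    Tendsto (fun x : ℝ =>
        ∑ i ∈ Finset.univ.filter (fun i => 1 < r i + 1 / x),
          (π i * Real.log (r i + 1 / x) -
            r i * π i * (1 - x / (1 + x * r i))))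
      (nhdsWithin 0 (Set.Ioi 0)) atTop ∧
    Tendsto (fun x : ℝ =>
        ∑ i ∈ Finset.univ.filter (fun i => 1 < r i + 1 / x),
          (π i * Real.log (r i + 1 / x) -
            r i * π i * (1 - x / (1 + x * r i))))
      atTop
      (nhds (∑ i ∈ Finset.univ.filter (fun i => 1 < r i),
        π i * (Real.log (r i) - (r i - 1)))) ∧
    (∑ i ∈ Finset.univ.filter (fun i => 1 < r i),
        π i * (Real.log (r i) - (r i - 1))) < 0 ∧
    ∃ lam : ℝ, 0 < lam ∧
      (∑ i ∈ Finset.univ.filter (fun i => 1 < r i + 1 / lam),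
        (π i * Real.log (r i + 1 / lam) -
          r i * π i * (1 - lam / (1 + lam * r i)))) = 0 := by
  classical
  obtain ⟨i0, hi0⟩ := hsup
  set g : Fin k → ℝ → ℝ := fun i x =>
    π i * Real.log (r i + 1 / x) - r i * π i * (1 - x / (1 + x * r i)) with hg_def
  set F : ℝ → ℝ := fun x =>
    ∑ i ∈ Finset.univ.filter (fun i => 1 < r i + 1 / x), g i x with hF_def
  -- Part 1 : tendsto atTop as x → 0⁺
  have hg_top : ∀ i, Tendsto (g i) (nhdsWithin 0 (Set.Ioi 0)) atTop := by
    intro i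
    have h1x : Tendsto (fun x : ℝ => 1 / x) (nhdsWithin 0 (Set.Ioi 0)) atTop := by
      simpa [one_div] using
        (tendsto_inv_nhdsGT_zero : Tendsto (fun x : ℝ => x⁻¹) (nhdsWithin 0 (Set.Ioi 0)) atTop)
    have hA : Tendsto (fun x : ℝ => π i * Real.log (r i + 1 / x))
        (nhdsWithin 0 (Set.Ioi 0)) atTop := by
      apply Tendsto.const_mul_atTop (hπ i)
      exact Real.tendsto_log_atTop.comp (tendsto_atTop_add_const_left _ (r i) h1x)
    have hB : Tendsto (fun x : ℝ => -(r i * π i * (1 - x / (1 + x * r i))))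
        (nhdsWithin 0 (Set.Ioi 0)) (nhds (-(r i * π i))) := by
      have hc : ContinuousAt (fun x : ℝ => -(r i * π i * (1 - x / (1 + x * r i)))) 0 := by
        apply ContinuousAt.neg
        apply ContinuousAt.mul continuousAt_const
        apply ContinuousAt.sub continuousAt_const
        exact continuousAt_id.div (by fun_prop) (by norm_num)
      have := hc.tendsto.mono_left (nhdsWithin_le_nhds (s := Set.Ioi (0:ℝ)))
      simpa using this
    have := hA.atTop_add hB
    simp only [hg_def]
    refine this.congr fun x => by ring
  have hg_ev0 : ∀ᶠ x in nhdsWithin (0:ℝ) (Set.Ioi 0), ∀ i, 0 ≤ g i x :=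
    eventually_all.2 fun i => (hg_top i).eventually_ge_atTop 0
  have hev1 : ∀ᶠ x in nhdsWithin (0:ℝ) (Set.Ioi 0), F x = ∑ i, g i x := by
    have hlt1 : ∀ᶠ x in nhdsWithin (0:ℝ) (Set.Ioi 0), x < 1 :=
      ((eventually_lt_nhds zero_lt_one).filter_mono nhdsWithin_le_nhds)
    filter_upwards [eventually_mem_nhdsWithin, hlt1] with x hx hx1
    have : Finset.univ.filter (fun i => 1 < r i + 1 / x) = Finset.univ := by
      apply Finset.filter_true_of_mem
      intro i _
      have h1 : 1 < 1 / x := one_lt_one_div hx hx1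
      have := hr i
      linarith
    simp only [hF_def, this]
  have h1 : Tendsto F (nhdsWithin 0 (Set.Ioi 0)) atTop := by
    apply tendsto_atTop_mono' _ _ (hg_top i0)
    filter_upwards [hev1, hg_ev0] with x hx hall
    rw [hx]
    exact Finset.single_le_sum (fun i _ => hall i) (Finset.mem_univ i0)
  -- the set of eventually-active indices
  set S : Finset (Fin k) := Finset.univ.filter (fun i => 1 ≤ r i) with hS_def
  set T : Finset (Fin k) := Finset.univ.filter (fun i => 1 < r i) with hT_def
  have hevS : ∀ᶠ x : ℝ in atTop, Finset.univ.filter (fun i => 1 < r i + 1 / x) = S := by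
    have hcond : ∀ i, ∀ᶠ x : ℝ in atTop, (1 < r i + 1 / x ↔ 1 ≤ r i) := by
      intro i
      rcases le_or_gt 1 (r i) with h | h
      · filter_upwards [eventually_gt_atTop (0:ℝ)] with x hx
        have h1 : 0 < 1 / x := by positivity
        constructor <;> intro <;> [exact h; linarith]
      · filter_upwards [eventually_gt_atTop (1 / (1 - r i))] with x hx
        have h1r : 0 < 1 - r i := by linarith
        have hx0 : 0 < x := lt_trans (by positivity) hx
        have h2 : 1 / x < 1 - r i := by
          have := one_div_lt_one_div_of_lt (by positivity) hx
          rwa [one_div_one_div] at this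
        constructor
        · intro hlt; linarith
        · intro hge; linarith
    filter_upwards [eventually_all.2 hcond] with x hx
    ext i
    simp only [Finset.mem_filter, Finset.mem_univ, true_and, hS_def, hx i]
  have hgi_lim : ∀ i ∈ S, Tendsto (g i) atTop
      (nhds (π i * Real.log (r i) - r i * π i * (1 - 1 / r i))) := by
    intro i _
    have hri := hr i
    have h1x : Tendsto (fun x : ℝ => 1 / x) atTop (nhds 0) := by
      simpa [one_div] using (tendsto_inv_atTop_zero : Tendsto (fun x : ℝ => x⁻¹) atTop (nhds 0))
    have hadd : Tendsto (fun x : ℝ => r i + 1 / x) atTop (nhds (r i)) := by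
      simpa using tendsto_const_nhds.add h1x
    have hA : Tendsto (fun x : ℝ => π i * Real.log (r i + 1 / x)) atTop
        (nhds (π i * Real.log (r i))) :=
      (((Real.continuousAt_log hri.ne').tendsto.comp hadd)).const_mul _
    have hdiv : Tendsto (fun x : ℝ => x / (1 + x * r i)) atTop (nhds (1 / r i)) := by
      have heq : ∀ᶠ x : ℝ in atTop, 1 / (1 / x + r i) = x / (1 + x * r i) := by
        filter_upwards [eventually_gt_atTop (0:ℝ)] with x hx
        have h1 : 1 / x + r i = (1 + x * r i) / x := by field_simp
        rw [h1, one_div_div]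
      have hden : Tendsto (fun x : ℝ => 1 / x + r i) atTop (nhds (0 + r i)) :=
        h1x.add tendsto_const_nhds
      have : Tendsto (fun x : ℝ => 1 / (1 / x + r i)) atTop (nhds (1 / (0 + r i))) :=
        tendsto_const_nhds.div hden (by simpa using hri.ne')
      rw [zero_add] at this
      exact this.congr' heq
    have hB : Tendsto (fun x : ℝ => r i * π i * (1 - x / (1 + x * r i))) atTop
        (nhds (r i * π i * (1 - 1 / r i))) :=
      (tendsto_const_nhds.sub hdiv).const_mul _
    exact hA.sub hB
  have hconst : (∑ i ∈ S, (π i * Real.log (r i) - r i * π i * (1 - 1 / r i)))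
      = ∑ i ∈ T, π i * (Real.log (r i) - (r i - 1)) := by
    have hsub : T ⊆ S := by
      intro i hi
      simp only [hT_def, hS_def, Finset.mem_filter, Finset.mem_univ, true_and] at *
      linarith
    rw [← Finset.sum_subset hsub]
    · apply Finset.sum_congr rfl
      intro i hi
      have h1 : 1 < r i := by
        simpa [hT_def] using hi
      have hne : r i ≠ 0 := (hr i).ne'
      field_simp
    · intro i hiS hiT
      have h1 : 1 ≤ r i := by simpa [hS_def] using hiS
      have h2 : ¬ 1 < r i := by simpa [hT_def] using hiT
      have : r i = 1 := le_antisymm (not_lt.1 h2) h1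
      simp [this]
  have h2 : Tendsto F atTop (nhds (∑ i ∈ T, π i * (Real.log (r i) - (r i - 1)))) := by
    rw [← hconst]
    have hH : Tendsto (fun x => ∑ i ∈ S, g i x) atTop
        (nhds (∑ i ∈ S, (π i * Real.log (r i) - r i * π i * (1 - 1 / r i)))) :=
      tendsto_finset_sum _ hgi_lim
    apply hH.congr'
    filter_upwards [hevS] with x hx
    simp only [hF_def, hx]
  have h3 : (∑ i ∈ T, π i * (Real.log (r i) - (r i - 1))) < 0 := by
    apply Finset.sum_neg
    · intro i hi
      have h1 : 1 < r i := by simpa [hT_def] using hi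
      have hlog : Real.log (r i) < r i - 1 :=
        Real.log_lt_sub_one_of_pos (hr i) (by linarith)
      exact mul_neg_of_pos_of_neg (hπ i) (by linarith)
    · exact ⟨i0, by simpa [hT_def] using hi0⟩
  -- Part 4: existence of a zero, via the continuous extension G
  set G : ℝ → ℝ := fun x => ∑ i : Fin k,
      (π i * Real.log (max (r i + 1 / x) 1) -
        r i * π i * max (1 - x / (1 + x * r i)) 0) with hG_def
  have hFG : ∀ x : ℝ, 0 < x → F x = G x := by
    intro x hx
    simp only [hF_def, hG_def, Finset.sum_filter]
    apply Finset.sum_congr rfl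
    intro i _
    have hri := hr i
    have hden : 0 < 1 + x * r i := by positivity
    by_cases h : 1 < r i + 1 / x
    · rw [if_pos h]
      have h' : 1 - r i < 1 / x := by linarith
      have hxr : (1 - r i) * x < 1 := by
        have := mul_lt_mul_of_pos_right h' hx
        rwa [one_div, inv_mul_cancel₀ hx.ne'] at this
      have hlt : x / (1 + x * r i) < 1 := by
        rw [div_lt_one hden]; nlinarith
      rw [max_eq_left h.le, max_eq_left (by linarith : (0:ℝ) ≤ 1 - x / (1 + x * r i))]
    · rw [if_neg h]
      push_neg at h
      have h' : 1 / x ≤ 1 - r i := by linarith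
      have hxr : 1 ≤ (1 - r i) * x := by
        have := mul_le_mul_of_nonneg_right h' hx.le
        rwa [one_div, inv_mul_cancel₀ hx.ne'] at this
      have hge : 1 ≤ x / (1 + x * r i) := by
        rw [le_div_iff₀ hden]; nlinarith
      rw [max_eq_right h, Real.log_one,
        max_eq_right (by linarith : 1 - x / (1 + x * r i) ≤ 0)]
      simp
  have hGc : ContinuousOn G (Set.Ioi 0) := by
    apply continuousOn_finset_sum
    intro i _
    have hri := hr i
    have c1 : ContinuousOn (fun x : ℝ => r i + 1 / x) (Set.Ioi 0) :=
      continuousOn_const.add (continuousOn_const.div continuousOn_id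
        (fun x hx => ne_of_gt hx))
    have c2 : ContinuousOn (fun x : ℝ => max (r i + 1 / x) 1) (Set.Ioi 0) :=
      by simpa using (c1.sup continuousOn_const)
    have clog : ContinuousOn (fun x : ℝ => Real.log (max (r i + 1 / x) 1)) (Set.Ioi 0) :=
      c2.log (fun x _ => (lt_of_lt_of_le zero_lt_one (le_max_right _ _)).ne')
    have c3 : ContinuousOn (fun x : ℝ => x / (1 + x * r i)) (Set.Ioi 0) := by
      apply ContinuousOn.div continuousOn_id
        (continuousOn_const.add (continuousOn_id.mul continuousOn_const))
      intro x hx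
      have hx0 : 0 < x := hx
      show 1 + x * r i ≠ 0
      positivity
    exact (continuousOn_const.mul clog).sub
      (continuousOn_const.mul (by simpa using ((continuousOn_const.sub c3).sup continuousOn_const) : ContinuousOn (fun x : ℝ => max (1 - x / (1 + x * r i)) 0) (Set.Ioi 0)))
  have h4 : ∃ lam : ℝ, 0 < lam ∧ F lam = 0 := by
    obtain ⟨a, haF, ha0⟩ := ((h1.eventually_ge_atTop 1).and eventually_mem_nhdsWithin).exists
    obtain ⟨b, hbF, hab⟩ := ((h2.eventually_lt_const h3).and (eventually_ge_atTop a)).exists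
    have ha0' : (0:ℝ) < a := ha0
    have hb0 : (0:ℝ) < b := lt_of_lt_of_le ha0' hab
    have hmem : (0:ℝ) ∈ Set.Icc (G b) (G a) := by
      constructor
      · rw [← hFG b hb0]; exact hbF.le
      · rw [← hFG a ha0']; linarith
    obtain ⟨c, hc, hGc0⟩ := intermediate_value_Icc' hab
      (hGc.mono (fun x hx => lt_of_lt_of_le ha0' hx.1)) hmem
    refine ⟨c, lt_of_lt_of_le ha0' hc.1, ?_⟩
    rw [hFG c (lt_of_lt_of_le ha0' hc.1), hGc0]
  exact ⟨h1, h2, h3, h4⟩
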